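/- Let Φ : I → ℝ be a convex function on an interval I of positive real numbers that is continuously differentiable on the interior of I, let T, V be bounded linear invertible operators on a complex Hilbert space H, and let 0 < m < M with [m², M²] contained in the interior of I and m‖Tx‖ ≤ ‖Vx‖ ≤ M‖Tx‖ for all x ∈ H. Then in the operator order: ⊙_Φ(V,T) ≤ ((M²−m²)⁻¹ ∫_{m²}^{M²} Φ(t) dt)·|T|² + ⊙_{Φ'·ℓ}(V,T) − ((m²+M²)/2)·⊙_{Φ'}(V,T), where ℓ is the identity function, ⊙_{Φ'·ℓ}(V,T) = T* (Φ'(X)·X) T and ⊙_{Φ'}(V,T) = T* Φ'(X) T with X = |VT⁻¹|². -/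

import Mathlib

variable {H : Type*} [NormedAddCommGroup H] [InnerProductSpace ℂ H] [CompleteSpace H]

/-- `X = |VT⁻¹|² = (T*)⁻¹ V* V T⁻¹`. -/
noncomputable def qX (V T : (H →L[ℂ] H)ˣ) : H →L[ℂ] H :=
  star (↑(T⁻¹) : H →L[ℂ] H) * (star (V : H →L[ℂ] H) * (V : H →L[ℂ] H)) * (↑(T⁻¹) : H →L[ℂ] H)

/-- The quadratic operator perspective `⊙_Φ(V,T) = T* Φ(X) T`. -/
noncomputable def qPersp (Φ : ℝ → ℝ) (V T : (H →L[ℂ] H)ˣ) : H →L[ℂ] H :=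
  star (T : H →L[ℂ] H) * cfc Φ (qX V T) * (T : H →L[ℂ] H)

/-- `|T|² = T*T`. -/
noncomputable def modSq (T : (H →L[ℂ] H)ˣ) : H →L[ℂ] H :=
  star (T : H →L[ℂ] H) * (T : H →L[ℂ] H)

lemma aux_re_smul (c : ℝ) (x : H) :
    RCLike.re (inner ℂ ((c : ℂ) • x) x) = c * ‖x‖ ^ 2 := by
  rw [inner_smul_left, Complex.conj_ofReal]
  have h2 : (inner ℂ x x).re = ‖x‖ ^ 2 := by
    have := inner_self_eq_norm_sq (𝕜 := ℂ) x
    simpa [RCLike.re_to_complex] using this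
  simp only [RCLike.re_to_complex, Complex.mul_re, Complex.ofReal_re, Complex.ofReal_im,
    zero_mul, sub_zero, h2]

lemma aux_lb (c : ℝ) (A : H →L[ℂ] H) (hA : IsSelfAdjoint A)
    (h : ∀ x : H, c * ‖x‖ ^ 2 ≤ RCLike.re (inner ℂ (A x) x)) :
    algebraMap ℝ (H →L[ℂ] H) c ≤ A := by
  rw [ContinuousLinearMap.le_def]
  refine ⟨(hA.sub (IsSelfAdjoint.algebraMap _ (star_trivial c))).isSymmetric, fun x => ?_⟩
  rw [ContinuousLinearMap.reApplyInnerSelf_apply]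
  simp only [ContinuousLinearMap.sub_apply, inner_sub_left, map_sub]
  have h1 : (algebraMap ℝ (H →L[ℂ] H) c) x = (c : ℂ) • x := by
    rw [Algebra.algebraMap_eq_smul_one]
    simp [Complex.coe_smul]
  rw [h1, aux_re_smul]
  linarith [h x]

lemma aux_ub (c : ℝ) (A : H →L[ℂ] H) (hA : IsSelfAdjoint A)
    (h : ∀ x : H, RCLike.re (inner ℂ (A x) x) ≤ c * ‖x‖ ^ 2) :
    A ≤ algebraMap ℝ (H →L[ℂ] H) c := by
  rw [ContinuousLinearMap.le_def]
  refine ⟨((IsSelfAdjoint.algebraMap _ (star_trivial c)).sub hA).isSymmetric, fun x => ?_⟩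
  rw [ContinuousLinearMap.reApplyInnerSelf_apply]
  simp only [ContinuousLinearMap.sub_apply, inner_sub_left, map_sub]
  have h1 : (algebraMap ℝ (H →L[ℂ] H) c) x = (c : ℂ) • x := by
    rw [Algebra.algebraMap_eq_smul_one]
    simp [Complex.coe_smul]
  rw [h1, aux_re_smul]
  linarith [h x]

lemma scalar_key (I : Set ℝ) (Φ Φ' : ℝ → ℝ) (hΦ : ConvexOn ℝ I Φ)
    (hΦ' : ∀ s ∈ interior I, HasDerivAt Φ (Φ' s) s)
    (a b : ℝ) (hab : a < b) (hsub : Set.Icc a b ⊆ interior I)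
    (t : ℝ) (ht : t ∈ Set.Icc a b) :
    Φ t ≤ (b - a)⁻¹ * (∫ s in a..b, Φ s) + (Φ' t * t - ((a + b) / 2) * Φ' t) := by
  have htI : t ∈ interior I := hsub ht
  have hIsub : Set.Icc a b ⊆ I := fun s hs => interior_subset (hsub hs)
  have hderiv := hΦ' t htI
  have h_tangent : ∀ s ∈ Set.Icc a b, Φ t + Φ' t * (s - t) ≤ Φ s := by
    intro s hs
    rcases lt_trichotomy t s with h | h | h
    · have := hΦ.le_slope_of_hasDerivAt (hIsub ht) (hIsub hs) h hderiv
      rw [slope_def_field, le_div_iff₀ (by linarith)] at this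
      nlinarith
    · simp [h]
    · have := hΦ.slope_le_of_hasDerivAt (hIsub hs) (hIsub ht) h hderiv
      rw [slope_def_field, div_le_iff₀ (by linarith)] at this
      nlinarith
  have hΦcont : ContinuousOn Φ (Set.Icc a b) :=
    fun s hs => ((hΦ' s (hsub hs)).continuousAt).continuousWithinAt
  have hint1 : IntervalIntegrable Φ MeasureTheory.volume a b :=
    hΦcont.intervalIntegrable_of_Icc hab.le
  have hint2 : IntervalIntegrable (fun s => Φ t + Φ' t * (s - t)) MeasureTheory.volume a b := by
    exact (continuous_const.add (continuous_const.mul (continuous_id.sub continuous_const))).intervalIntegrable _ _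
  have hmono := intervalIntegral.integral_mono_on hab.le hint2 hint1 h_tangent
  have hcalc : (∫ s in a..b, (Φ t + Φ' t * (s - t))) =
      (b - a) * Φ t + Φ' t * ((b ^ 2 - a ^ 2) / 2 - t * (b - a)) := by
    rw [intervalIntegral.integral_add intervalIntegrable_const
        (Continuous.intervalIntegrable (u := fun s => Φ' t * (s - t)) (by continuity) _ _),
      intervalIntegral.integral_const_mul,
      intervalIntegral.integral_sub intervalIntegral.intervalIntegrable_id intervalIntegrable_const,
      integral_id, intervalIntegral.integral_const, intervalIntegral.integral_const]
    simp only [smul_eq_mul]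
    ring
  rw [hcalc] at hmono
  have hba : (0:ℝ) < b - a := by linarith
  rw [inv_mul_eq_div, ← sub_le_iff_le_add]
  rw [le_div_iff₀ hba]
  nlinarith [hmono]

lemma qX_facts (V T : (H →L[ℂ] H)ˣ) (m M : ℝ) (hm : 0 < m) (hmM : m < M)
    (hTV : ∀ x : H, m * ‖(T : H →L[ℂ] H) x‖ ≤ ‖(V : H →L[ℂ] H) x‖ ∧ ‖(V : H →L[ℂ] H) x‖ ≤ M * ‖(T : H →L[ℂ] H) x‖) :
    IsSelfAdjoint (qX V T) ∧ spectrum ℝ (qX V T) ⊆ Set.Icc (m ^ 2) (M ^ 2) := by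
  set W : H →L[ℂ] H := (V : H →L[ℂ] H) * (↑(T⁻¹) : H →L[ℂ] H) with hW
  have hXW : qX V T = star W * W := by
    simp [qX, hW, star_mul, mul_assoc]
  have hXsa : IsSelfAdjoint (qX V T) := by
    rw [hXW]; exact IsSelfAdjoint.star_mul_self W
  have hTinv : ∀ x : H, (↑T : H →L[ℂ] H) ((↑(T⁻¹) : H →L[ℂ] H) x) = x := by
    intro x
    calc (↑T : H →L[ℂ] H) ((↑(T⁻¹) : H →L[ℂ] H) x)
        = ((↑T : H →L[ℂ] H) * (↑(T⁻¹) : H →L[ℂ] H)) x := rfl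
      _ = x := by
          rw [← Units.val_mul, mul_inv_cancel, Units.val_one, ContinuousLinearMap.one_apply]
  have hre : ∀ x : H, RCLike.re (inner ℂ ((qX V T) x) x) = ‖W x‖ ^ 2 := by
    intro x
    rw [hXW]
    rw [ContinuousLinearMap.mul_apply, ContinuousLinearMap.star_eq_adjoint,
      ContinuousLinearMap.adjoint_inner_left]
    exact inner_self_eq_norm_sq (𝕜 := ℂ) (W x)
  have hWnorm : ∀ x : H, m * ‖x‖ ≤ ‖W x‖ ∧ ‖W x‖ ≤ M * ‖x‖ := by
    intro x
    have h := hTV ((↑(T⁻¹) : H →L[ℂ] H) x)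
    rw [hTinv x] at h
    exact h
  have hlow : algebraMap ℝ (H →L[ℂ] H) (m ^ 2) ≤ qX V T := by
    apply aux_lb _ _ hXsa
    intro x
    rw [hre x]
    have h2 := pow_le_pow_left₀ (by positivity) (hWnorm x).1 2
    calc m ^ 2 * ‖x‖ ^ 2 = (m * ‖x‖) ^ 2 := by ring
      _ ≤ ‖W x‖ ^ 2 := h2
  have hup : qX V T ≤ algebraMap ℝ (H →L[ℂ] H) (M ^ 2) := by
    apply aux_ub _ _ hXsa
    intro x
    rw [hre x]
    have h2 := pow_le_pow_left₀ (norm_nonneg (W x)) (hWnorm x).2 2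
    calc ‖W x‖ ^ 2 ≤ (M * ‖x‖) ^ 2 := h2
      _ = M ^ 2 * ‖x‖ ^ 2 := by ring
  refine ⟨hXsa, fun t ht => ⟨?_, ?_⟩⟩
  · exact (algebraMap_le_iff_le_spectrum hXsa).mp hlow t ht
  · exact (le_algebraMap_iff_spectrum_le hXsa).mp hup t ht

theorem stmt11 (I : Set ℝ) (hIpos : I ⊆ Set.Ioi 0)
    (Φ Φ' : ℝ → ℝ) (hΦ : ConvexOn ℝ I Φ)
    (hΦ' : ∀ s ∈ interior I, HasDerivAt Φ (Φ' s) s)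
    (hΦ'c : ContinuousOn Φ' (interior I))
    (T V : (H →L[ℂ] H)ˣ) (m M : ℝ) (hm : 0 < m) (hmM : m < M)
    (hsub : Set.Icc (m ^ 2) (M ^ 2) ⊆ interior I)
    (hTV : ∀ x : H, m * ‖(T : H →L[ℂ] H) x‖ ≤ ‖(V : H →L[ℂ] H) x‖ ∧ ‖(V : H →L[ℂ] H) x‖ ≤ M * ‖(T : H →L[ℂ] H) x‖) :
    qPersp Φ V T ≤
      ((M ^ 2 - m ^ 2)⁻¹ * ∫ t in (m ^ 2 : ℝ)..(M ^ 2), Φ t) • modSq T +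
        qPersp (fun s => Φ' s * s) V T -
        ((m ^ 2 + M ^ 2) / 2) • qPersp Φ' V T := by
  obtain ⟨hXsa, hspec⟩ := qX_facts V T m M hm hmM hTV
  have hab : m ^ 2 < M ^ 2 := by nlinarith
  set X := qX V T with hX
  set cst := (M ^ 2 - m ^ 2)⁻¹ * ∫ t in (m ^ 2 : ℝ)..(M ^ 2), Φ t with hcst
  set μ := (m ^ 2 + M ^ 2) / 2 with hμ
  have key : ∀ t ∈ spectrum ℝ X, Φ t ≤ cst + (Φ' t * t - μ * Φ' t) := by
    intro t ht
    have := scalar_key I Φ Φ' hΦ hΦ' (m ^ 2) (M ^ 2) hab hsub t (hspec ht)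
    rw [hcst, hμ]
    linarith
  have hspecint : spectrum ℝ X ⊆ interior I := fun s hs => hsub (hspec hs)
  have hΦcont : ContinuousOn Φ (spectrum ℝ X) :=
    fun s hs => ((hΦ' s (hspecint hs)).continuousAt).continuousWithinAt
  have hΦ'cont : ContinuousOn Φ' (spectrum ℝ X) := hΦ'c.mono hspecint
  have hmulcont : ContinuousOn (fun s => Φ' s * s) (spectrum ℝ X) :=
    hΦ'cont.mul continuousOn_id
  have hgcont : ContinuousOn (fun t => cst + (Φ' t * t - μ * Φ' t)) (spectrum ℝ X) :=
    continuousOn_const.add (hmulcont.sub (continuousOn_const.mul hΦ'cont))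
  have hle : cfc Φ X ≤ cfc (fun t => cst + (Φ' t * t - μ * Φ' t)) X :=
    cfc_mono key hΦcont hgcont
  have hsplit : cfc (fun t => cst + (Φ' t * t - μ * Φ' t)) X
      = algebraMap ℝ (H →L[ℂ] H) cst + (cfc (fun s => Φ' s * s) X - μ • cfc Φ' X) := by
    rw [cfc_add (a := X) (fun _ => cst) (fun t => Φ' t * t - μ * Φ' t) continuousOn_const
        (hmulcont.sub (continuousOn_const.mul hΦ'cont)),
      cfc_const cst X hXsa,
      cfc_sub (fun s => Φ' s * s) (fun t => μ * Φ' t) X hmulcont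
        (continuousOn_const.mul hΦ'cont),
      cfc_const_mul μ Φ' X hΦ'cont]
  calc qPersp Φ V T = star (↑T : H →L[ℂ] H) * cfc Φ X * (↑T : H →L[ℂ] H) := rfl
    _ ≤ star (↑T : H →L[ℂ] H) *
          (algebraMap ℝ (H →L[ℂ] H) cst + (cfc (fun s => Φ' s * s) X - μ • cfc Φ' X)) *
          (↑T : H →L[ℂ] H) := by
        rw [← hsplit]
        exact star_left_conjugate_le_conjugate hle _
    _ = cst • modSq T + qPersp (fun s => Φ' s * s) V T - μ • qPersp Φ' V T := by
        simp only [qPersp, modSq, mul_add, add_mul, mul_sub, sub_mul,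
          Algebra.algebraMap_eq_smul_one, mul_smul_comm, smul_mul_assoc, mul_one]
        abel
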